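/- The map t ↦ Φ(Φ⁻¹(p) − t) for fixed p ∈ (0,1) is a strictly decreasing continuous bijection from ℝ onto (0,1), and the unique t at which Φ(Φ⁻¹(p_A) − t) = Φ(Φ⁻¹(p_B) + t) is t* = (Φ⁻¹(p_A) − Φ⁻¹(p_B))/2; hence the certified ℓ₂ radius σ·t* = (σ/2)(Φ⁻¹(p_A) − Φ⁻¹(p_B)) is the supremum of radii r for which Φ(Φ⁻¹(p_A) − r/σ) > Φ(Φ⁻¹(p_B) + r/σ). -/

import Mathlib

open MeasureTheory ProbabilityTheory

/-- Standard normal CDF. -/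
noncomputable def Phi (t : ℝ) : ℝ := ((gaussianReal 0 1) (Set.Iic t)).toReal

/-- Inverse of the standard normal CDF on (0,1). -/
noncomputable def PhiInv (p : ℝ) : ℝ := Function.invFun Phi p

/-- Isotropic Gaussian N(0, σ²I) on ℝ^d. -/
noncomputable def isoGaussian (d : ℕ) (σ : ℝ) : Measure (EuclideanSpace ℝ (Fin d)) :=
  (Measure.pi fun _ : Fin d => gaussianReal 0 ⟨σ ^ 2, sq_nonneg σ⟩).map
    (MeasurableEquiv.toLp 2 (Fin d → ℝ))

lemma Phi_eq_cdf (t : ℝ) : Phi t = ProbabilityTheory.cdf (gaussianReal 0 1) t :=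
  (ProbabilityTheory.cdf_eq_real _ t).symm

lemma Phi_eq_integral (t : ℝ) : Phi t = ∫ x in Set.Iic t, gaussianPDFReal 0 1 x := by
  rw [Phi, gaussianReal_apply_eq_integral 0 one_ne_zero,
    ENNReal.toReal_ofReal (integral_nonneg fun x => gaussianPDFReal_nonneg 0 1 x)]

lemma Phi_sub (a b : ℝ) : Phi b - Phi a = ∫ x in a..b, gaussianPDFReal 0 1 x := by
  rw [Phi_eq_integral, Phi_eq_integral]
  exact intervalIntegral.integral_Iic_sub_Iic
    ((integrable_gaussianPDFReal 0 1).integrableOn)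
    ((integrable_gaussianPDFReal 0 1).integrableOn)

lemma Phi_strictMono : StrictMono Phi := by
  intro a b hab
  have h := Phi_sub a b
  have hpos : 0 < ∫ x in a..b, gaussianPDFReal 0 1 x :=
    intervalIntegral.intervalIntegral_pos_of_pos ((integrable_gaussianPDFReal 0 1).intervalIntegrable)
      (fun x => gaussianPDFReal_pos 0 1 x one_ne_zero) hab
  linarith

lemma Phi_continuous : Continuous Phi := by
  have h : Continuous fun t : ℝ => ∫ x in (0:ℝ)..t, gaussianPDFReal 0 1 x :=
    (integrable_gaussianPDFReal 0 1).continuous_primitive 0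
  have heq : Phi = fun t : ℝ => Phi 0 + ∫ x in (0:ℝ)..t, gaussianPDFReal 0 1 x := by
    funext t
    have := Phi_sub 0 t
    linarith
  rw [heq]
  exact continuous_const.add h

lemma Phi_eq_cdf' : Phi = ⇑(ProbabilityTheory.cdf (gaussianReal 0 1)) := funext Phi_eq_cdf

lemma Phi_tendsto_atTop : Filter.Tendsto Phi Filter.atTop (nhds 1) := by
  rw [Phi_eq_cdf']
  exact ProbabilityTheory.tendsto_cdf_atTop _

lemma Phi_tendsto_atBot : Filter.Tendsto Phi Filter.atBot (nhds 0) := by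
  rw [Phi_eq_cdf']
  exact ProbabilityTheory.tendsto_cdf_atBot _

lemma Phi_mem_Ioo (t : ℝ) : Phi t ∈ Set.Ioo (0:ℝ) 1 := by
  constructor
  · have h := Phi_strictMono (show t - 1 < t by linarith)
    have h0 : 0 ≤ Phi (t - 1) := by
      rw [Phi_eq_cdf]; exact ProbabilityTheory.cdf_nonneg _ _
    linarith
  · have h := Phi_strictMono (show t < t + 1 by linarith)
    have h1 : Phi (t + 1) ≤ 1 := by
      rw [Phi_eq_cdf]; exact ProbabilityTheory.cdf_le_one _ _
    linarith

lemma Phi_range : Set.range Phi = Set.Ioo (0:ℝ) 1 := by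
  apply subset_antisymm
  · rintro _ ⟨t, rfl⟩; exact Phi_mem_Ioo t
  · rintro y ⟨hy0, hy1⟩
    obtain ⟨a, ha⟩ : ∃ a, Phi a < y := (Phi_tendsto_atBot.eventually_lt_const hy0).exists
    obtain ⟨b, hb⟩ : ∃ b, y < Phi b := (Phi_tendsto_atTop.eventually_const_lt hy1).exists
    have hab : a ≤ b := le_of_lt (Phi_strictMono.lt_iff_lt.mp (ha.trans hb))
    obtain ⟨c, _, hc⟩ := intermediate_value_Icc hab Phi_continuous.continuousOn
      ⟨le_of_lt ha, le_of_lt hb⟩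
    exact ⟨c, hc⟩

lemma Phi_PhiInv {p : ℝ} (hp : p ∈ Set.Ioo (0:ℝ) 1) : Phi (PhiInv p) = p := by
  have hmem : p ∈ Set.range Phi := Phi_range ▸ hp
  exact Function.invFun_eq hmem

/-- The map t ↦ Φ(Φ⁻¹(p) − t) is a strictly decreasing continuous bijection onto (0,1);
the unique crossover of the two shifted bounds is t* = (Φ⁻¹(pA) − Φ⁻¹(pB))/2, and
σ·t* is the supremum of radii r with Φ(Φ⁻¹(pA) − r/σ) > Φ(Φ⁻¹(pB) + r/σ). -/
theorem certified_radius_crossover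
    (σ : ℝ) (hσ : 0 < σ)
    (pA pB : ℝ) (hpA : pA ∈ Set.Ioo (0 : ℝ) 1) (hpB : pB ∈ Set.Ioo (0 : ℝ) 1)
    (hAB : pB ≤ pA) :
    (∀ p ∈ Set.Ioo (0 : ℝ) 1,
      StrictAnti (fun t : ℝ => Phi (PhiInv p - t)) ∧
      Continuous (fun t : ℝ => Phi (PhiInv p - t)) ∧
      Set.range (fun t : ℝ => Phi (PhiInv p - t)) = Set.Ioo (0 : ℝ) 1) ∧
    (∀ t : ℝ, Phi (PhiInv pA - t) = Phi (PhiInv pB + t) ↔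
      t = (PhiInv pA - PhiInv pB) / 2) ∧
    IsLUB {r : ℝ | Phi (PhiInv pB + r / σ) < Phi (PhiInv pA - r / σ)}
      (σ / 2 * (PhiInv pA - PhiInv pB)) := by
  refine ⟨fun p _ => ⟨?_, ?_, ?_⟩, ?_, ?_⟩
  · intro s t hst
    exact Phi_strictMono (sub_lt_sub_left hst _)
  · exact Phi_continuous.comp (continuous_const.sub continuous_id)
  · have hsurj : Function.Surjective (fun t : ℝ => PhiInv p - t) :=
      fun y => ⟨PhiInv p - y, by ring⟩
    have : (fun t : ℝ => Phi (PhiInv p - t)) = Phi ∘ (fun t : ℝ => PhiInv p - t) := rfl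
    rw [this, Set.range_comp, hsurj.range_eq, Set.image_univ, Phi_range]
  · intro t
    constructor
    · intro h
      have := Phi_strictMono.injective h
      linarith
    · intro h
      subst h
      congr 1
      ring
  · have hset : {r : ℝ | Phi (PhiInv pB + r / σ) < Phi (PhiInv pA - r / σ)} =
        Set.Iio (σ / 2 * (PhiInv pA - PhiInv pB)) := by
      ext r
      simp only [Set.mem_setOf_eq, Set.mem_Iio, Phi_strictMono.lt_iff_lt]
      have hr : r / σ * σ = r := div_mul_cancel₀ r hσ.ne'
      constructor
      · intro h
        nlinarith [mul_lt_mul_of_pos_right h hσ]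
      · intro h
        have h2 : r / σ < (PhiInv pA - PhiInv pB) / 2 := by
          rw [div_lt_div_iff₀ hσ (by norm_num : (0:ℝ) < 2)]
          nlinarith
        linarith
    rw [hset]
    exact isLUB_Iio
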